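/- arXiv:1706.07970 — 3 statements merged into one kernel-verified Lean document; each statement's English description precedes it below -/
import Mathlib

section
/- The projective special linear group PSL(2,7) (equivalently PSL(3,2), a simple group of order 168) is a Hurwitz group: there exist x, y ∈ PSL(2,7) with x of order 2, y of order 3, x*y of order 7, and ⟨x, y⟩ = PSL(2,7). -/
/-- PSL(2,7): the quotient of SL(2,7) by its center. -/
abbrev PSL27 : Type :=
  Matrix.SpecialLinearGroup (Fin 2) (ZMod 7) ⧸
    Subgroup.center (Matrix.SpecialLinearGroup (Fin 2) (ZMod 7))

namespace PSL27Aux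

abbrev SL27 := Matrix.SpecialLinearGroup (Fin 2) (ZMod 7)

instance : Fact (Nat.Prime 7) := ⟨by norm_num⟩

def um (t : ZMod 7) : SL27 := ⟨!![1, t; 0, 1], by simp [Matrix.det_fin_two_of]⟩
def lm (t : ZMod 7) : SL27 := ⟨!![1, 0; t, 1], by simp [Matrix.det_fin_two_of]⟩
def Sm : SL27 := ⟨!![0, 6; 1, 0], by decide⟩
def Ym : SL27 := ⟨!![1, 1; 6, 0], by decide⟩
def negOne : SL27 := ⟨!![6, 0; 0, 6], by decide⟩

lemma negOne_mem_center : negOne ∈ Subgroup.center SL27 := by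
  rw [Subgroup.mem_center_iff]
  intro g
  apply Subtype.ext
  have h : (negOne : Matrix (Fin 2) (Fin 2) (ZMod 7)) = -1 := by decide
  simp [h]

lemma um_mul (s t : ZMod 7) : um s * um t = um (s + t) := Subtype.ext (by
  rw [Matrix.SpecialLinearGroup.coe_mul]
  simp [um, Matrix.mul_fin_two, add_comm])
lemma lm_mul (s t : ZMod 7) : lm s * lm t = lm (s + t) := Subtype.ext (by
  rw [Matrix.SpecialLinearGroup.coe_mul]
  simp [lm, Matrix.mul_fin_two, add_comm])
lemma um_pow (n : ℕ) : (um 1) ^ n = um n := by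
  induction n with
  | zero => exact Subtype.ext (by decide)
  | succ k ih => rw [pow_succ, ih, um_mul]; norm_num
lemma lm_pow (n : ℕ) : (lm 1) ^ n = lm n := by
  induction n with
  | zero => exact Subtype.ext (by decide)
  | succ k ih => rw [pow_succ, ih, lm_mul]; norm_num
lemma um_eq_pow (t : ZMod 7) : um t = (um 1) ^ t.val := by
  rw [um_pow, ZMod.natCast_val, ZMod.cast_id]
lemma lm_eq_pow (t : ZMod 7) : lm t = (lm 1) ^ t.val := by
  rw [lm_pow, ZMod.natCast_val, ZMod.cast_id]

lemma key (a b c d : ZMod 7) (h : Matrix.det !![a, b; c, d] = 1) (hc : c ≠ 0) :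
    (⟨!![a, b; c, d], h⟩ : SL27) = um ((a - 1) / c) * lm c * um ((d - 1) / c) := by
  have hdet : a * d - b * c = 1 := by rw [← Matrix.det_fin_two_of]; exact h
  apply Subtype.ext
  rw [Matrix.SpecialLinearGroup.coe_mul, Matrix.SpecialLinearGroup.coe_mul]
  simp only [Matrix.SpecialLinearGroup.coe_mul, um, lm, Matrix.mul_fin_two]
  ext i j
  fin_cases i <;> fin_cases j <;> simp
  all_goals try field_simp
  all_goals first | ring1 | linear_combination -hdet

end PSL27Aux

open PSL27Aux in
theorem psl27_is_hurwitz :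
    ∃ x y : PSL27, orderOf x = 2 ∧ orderOf y = 3 ∧ orderOf (x * y) = 7 ∧
      Subgroup.closure {x, y} = ⊤ := by
  set π : SL27 →* PSL27 := QuotientGroup.mk' (Subgroup.center SL27) with hπ
  have pi_negOne : π negOne = 1 := (QuotientGroup.eq_one_iff negOne).mpr negOne_mem_center
  refine ⟨π Sm, π Ym, ?_, ?_, ?_, ?_⟩
  · -- order 2
    refine orderOf_eq_prime ?_ ?_
    · rw [pow_two, ← map_mul, show Sm * Sm = negOne from Subtype.ext (by decide)]
      exact pi_negOne
    · intro h
      have hm : Sm ∈ Subgroup.center SL27 := (QuotientGroup.eq_one_iff Sm).mp h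
      exact absurd (congrArg Subtype.val ((Subgroup.mem_center_iff.mp hm) (um 1)))
        (by decide)
  · -- order 3
    refine orderOf_eq_prime ?_ ?_
    · rw [show (3 : ℕ) = 2 + 1 from rfl, pow_succ, pow_two, ← map_mul, ← map_mul,
        show Ym * Ym * Ym = negOne from Subtype.ext (by decide)]
      exact pi_negOne
    · intro h
      have hm : Ym ∈ Subgroup.center SL27 := (QuotientGroup.eq_one_iff Ym).mp h
      exact absurd (congrArg Subtype.val ((Subgroup.mem_center_iff.mp hm) (um 1)))
        (by decide)
  · -- order 7
    have hxy : π Sm * π Ym = π (lm 1) := by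
      rw [← map_mul, show Sm * Ym = lm 1 from Subtype.ext (by decide)]
    refine orderOf_eq_prime ?_ ?_
    · rw [hxy, ← map_pow, lm_pow,
        show lm ((7 : ℕ) : ZMod 7) = 1 from Subtype.ext (by decide), map_one]
    · rw [hxy]
      intro h
      have hm : lm 1 ∈ Subgroup.center SL27 := (QuotientGroup.eq_one_iff (lm 1)).mp h
      exact absurd (congrArg Subtype.val ((Subgroup.mem_center_iff.mp hm) (um 1)))
        (by decide)
  · -- generation
    set H := Subgroup.closure {π Sm, π Ym} with hH
    have hx : π Sm ∈ H := Subgroup.subset_closure (Set.mem_insert _ _)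
    have hy : π Ym ∈ H := Subgroup.subset_closure (Set.mem_insert_of_mem _ rfl)
    have hl1 : π (lm 1) ∈ H := by
      rw [show π (lm 1) = π Sm * π Ym by
        rw [← map_mul, show Sm * Ym = lm 1 from Subtype.ext (by decide)]]
      exact mul_mem hx hy
    have hu1 : π (um 1) ∈ H := by
      have h := congrArg π (show um 1 * Ym = Sm * negOne from Subtype.ext (by decide))
      rw [map_mul, map_mul, pi_negOne, mul_one] at h
      rw [eq_mul_inv_of_mul_eq h]
      exact mul_mem hx (inv_mem hy)
    have hu : ∀ t : ZMod 7, π (um t) ∈ H := fun t => by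
      rw [um_eq_pow, map_pow]; exact pow_mem hu1 _
    have hl : ∀ t : ZMod 7, π (lm t) ∈ H := fun t => by
      rw [lm_eq_pow, map_pow]; exact pow_mem hl1 _
    have keymem : ∀ B : SL27, B.1 1 0 ≠ 0 → π B ∈ H := by
      intro B hB
      have h1 : B.1 = !![B.1 0 0, B.1 0 1; B.1 1 0, B.1 1 1] := Matrix.eta_fin_two _
      have hdet : Matrix.det !![B.1 0 0, B.1 0 1; B.1 1 0, B.1 1 1] = 1 := by
        rw [← h1]; exact B.2
      have hBe : B = (⟨!![B.1 0 0, B.1 0 1; B.1 1 0, B.1 1 1], hdet⟩ : SL27) :=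
        Subtype.ext h1
      rw [hBe, key _ _ _ _ hdet hB, map_mul, map_mul]
      exact mul_mem (mul_mem (hu _) (hl _)) (hu _)
    rw [eq_top_iff]
    intro g _
    obtain ⟨A, rfl⟩ := QuotientGroup.mk'_surjective (Subgroup.center SL27) g
    by_cases hc : A.1 1 0 = 0
    · have hdet := A.2
      rw [Matrix.det_fin_two] at hdet
      have hd : A.1 1 1 ≠ 0 := by
        intro h0
        rw [hc, h0] at hdet
        simp at hdet
      have hB : (A * lm 1).1 1 0 ≠ 0 := by
        show (A.1 * (lm 1).1) 1 0 ≠ 0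
        simp [lm, Matrix.mul_apply, Fin.sum_univ_two, hc, hd]
      have hmem := keymem (A * lm 1) hB
      rw [show A = (A * lm 1) * (lm 1)⁻¹ from (mul_inv_cancel_right A (lm 1)).symm,
        map_mul, map_inv]
      exact mul_mem hmem (inv_mem hl1)
    · exact keymem A hc
end

section
/- The group PSL(2,8) = SL(2,8) of order 504 is a Hurwitz group: there exist x, y ∈ SL(2,8) with x of order 2, y of order 3, x*y of order 7, generating the whole group. -/
open Matrix Polynomial

set_option maxHeartbeats 1000000
set_option synthInstance.maxHeartbeats 1000000

private theorem mul2 {F : Type*} [CommRing F] {a b c d e f g h p q r s : F}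
    (h00 : a*e + b*g = p) (h01 : a*f + b*h = q)
    (h10 : c*e + d*g = r) (h11 : c*f + d*h = s) :
    !![a, b; c, d] * !![e, f; g, h] = !![p, q; r, s] := by
  rw [Matrix.mul_fin_two, h00, h01, h10, h11]

private def uu {F : Type*} [Field F] (t : F) : Matrix.SpecialLinearGroup (Fin 2) F :=
  ⟨!![1, t; 0, 1], by rw [Matrix.det_fin_two_of]; ring⟩

private def ll {F : Type*} [Field F] (t : F) : Matrix.SpecialLinearGroup (Fin 2) F :=
  ⟨!![1, 0; t, 1], by rw [Matrix.det_fin_two_of]; ring⟩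

private theorem sl2_aux {F : Type*} [Field F] (α : F) (h2 : (2 : F) = 0)
    (hα : α^3 + α + 1 = 0) (hcard : Nat.card Fˣ = 7) :
    ∃ x y : Matrix.SpecialLinearGroup (Fin 2) F,
      orderOf x = 2 ∧ orderOf y = 3 ∧ orderOf (x * y) = 7 ∧
        Subgroup.closure {x, y} = ⊤ := by
  haveI : Fact (Nat.Prime 7) := ⟨by norm_num⟩
  have hα0 : α ≠ 0 := by
    intro h; rw [h] at hα; simp at hα
  have hα1 : α ≠ 1 := by
    intro h; rw [h] at hα
    have : (1 : F) = 0 := by linear_combination hα - h2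
    exact one_ne_zero this
  have hαp1 : α + 1 ≠ 0 := by
    intro h
    exact hα1 (by linear_combination h - h2)
  have hα21 : α^2 ≠ 1 := by
    intro h
    have h' : (α+1)*(α+1) = 0 := by linear_combination h + (α + 1) * h2
    exact hαp1 (mul_self_eq_zero.mp h')
  have ht0 : α + α^2 ≠ 0 := by
    intro h
    exact hαp1 (by
      have := mul_eq_zero.mp (show α * (α + 1) = 0 by linear_combination h)
      rcases this with h' | h'
      · exact absurd h' hα0
      · exact h')
  have ht1 : (1 : F) + α^2 ≠ 0 := by
    intro h
    exact hα21 (by linear_combination h - h2)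
  have hdetx : Matrix.det !![α^2, (1 : F) + α + α^2; (1 : F), α^2] = 1 := by rw [Matrix.det_fin_two_of]; linear_combination (α) * hα + ((-1 : F) + (-1 : F) * α + (-1 : F) * α^2) * h2
  have hdety : Matrix.det !![(1 : F) + α, α + α^2; α, α] = 1 := by rw [Matrix.det_fin_two_of]; linear_combination ((-1 : F)) * hα + (α) * h2
  have hdetz : Matrix.det !![α, 0; 0, (1 : F) + α^2] = 1 := by rw [Matrix.det_fin_two_of]; linear_combination ((1 : F)) * hα + ((-1 : F)) * h2
  have m1 : !![α, 0; 0, (1 : F) + α^2] * !![α, 0; 0, (1 : F) + α^2] = !![α^2, 0; 0, (1 : F) + α + α^2] := mul2 (by ring) (by ring) (by ring) (by linear_combination (α) * hα + ((-1 : F) * α) * h2)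
  have m2 : !![α^2, 0; 0, (1 : F) + α + α^2] * !![α, 0; 0, (1 : F) + α^2] = !![(1 : F) + α, 0; 0, α + α^2] := mul2 (by linear_combination ((1 : F)) * hα + ((-1 : F) + (-1 : F) * α) * h2) (by ring) (by ring) (by linear_combination ((1 : F) + α) * hα + ((-1 : F) * α) * h2)
  have m3 : !![(1 : F) + α, 0; 0, α + α^2] * !![α, 0; 0, (1 : F) + α^2] = !![α + α^2, 0; 0, (1 : F) + α] := mul2 (by ring) (by ring) (by ring) (by linear_combination ((1 : F) + α) * hα + ((-1 : F) + (-1 : F) * α) * h2)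
  have m4 : !![α + α^2, 0; 0, (1 : F) + α] * !![α, 0; 0, (1 : F) + α^2] = !![(1 : F) + α + α^2, 0; 0, α^2] := mul2 (by linear_combination ((1 : F)) * hα + ((-1 : F) + (-1 : F) * α) * h2) (by ring) (by ring) (by linear_combination ((1 : F)) * hα)
  have m5 : !![(1 : F) + α + α^2, 0; 0, α^2] * !![α, 0; 0, (1 : F) + α^2] = !![(1 : F) + α^2, 0; 0, α] := mul2 (by linear_combination ((1 : F)) * hα + ((-1 : F)) * h2) (by ring) (by ring) (by linear_combination (α) * hα + ((-1 : F) * α) * h2)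
  have m6 : !![(1 : F) + α^2, 0; 0, α] * !![α, 0; 0, (1 : F) + α^2] = !![(1 : F), 0; 0, (1 : F)] := mul2 (by linear_combination ((1 : F)) * hα + ((-1 : F)) * h2) (by ring) (by ring) (by linear_combination ((1 : F)) * hα + ((-1 : F)) * h2)
  have m7 : !![α^2, (1 : F) + α + α^2; (1 : F), α^2] * !![(1 : F) + α, α + α^2; α, α] = !![α, 0; 0, (1 : F) + α^2] := mul2 (by linear_combination ((2 : F)) * hα + ((-1 : F) + (-1 : F) * α + α^2) * h2) (by linear_combination ((2 : F) + α) * hα + ((-1 : F) + (-1 : F) * α) * h2) (by linear_combination ((1 : F)) * hα) (by linear_combination ((1 : F)) * hα + ((-1 : F)) * h2)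
  have m8 : !![α^2, (1 : F) + α + α^2; (1 : F), α^2] * !![α^2, (1 : F) + α + α^2; (1 : F), α^2] = !![(1 : F), 0; 0, (1 : F)] := mul2 (by linear_combination (α) * hα) (by linear_combination ((2 : F) + (2 : F) * α) * hα + ((-1 : F) + (-2 : F) * α) * h2) (by linear_combination (α^2) * h2) (by linear_combination (α) * hα)
  have m9 : !![(1 : F) + α, α + α^2; α, α] * !![(1 : F) + α, α + α^2; α, α] = !![α, α + α^2; α, (1 : F) + α] := mul2 (by linear_combination ((1 : F)) * hα + (α^2) * h2) (by linear_combination ((2 : F)) * hα + ((-1 : F) + (-1 : F) * α + α^2) * h2) (by linear_combination (α^2) * h2) (by linear_combination ((1 : F)) * hα + ((-1 : F) + (-1 : F) * α + α^2) * h2)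
  have m10 : !![α, α + α^2; α, (1 : F) + α] * !![(1 : F) + α, α + α^2; α, α] = !![(1 : F), 0; 0, (1 : F)] := mul2 (by linear_combination ((1 : F)) * hα + ((-1 : F) + α^2) * h2) (by linear_combination ((2 : F)) * hα + ((-1 : F) + (-1 : F) * α + α^2) * h2) (by linear_combination (α + α^2) * h2) (by linear_combination ((1 : F)) * hα + ((-1 : F) + α^2) * h2)
  have m11 : !![α^2, 0; 0, (1 : F) + α + α^2] * !![α^2, (1 : F) + α + α^2; (1 : F), α^2] = !![α + α^2, (1 : F); (1 : F) + α + α^2, (1 : F)] := mul2 (by linear_combination (α) * hα + ((-1 : F) * α + (-1 : F) * α^2) * h2) (by linear_combination ((1 : F) + α) * hα + ((-1 : F) + (-1 : F) * α) * h2) (by ring) (by linear_combination ((1 : F) + α) * hα + ((-1 : F) + (-1 : F) * α) * h2)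
  have m12 : !![α^2, (1 : F) + α + α^2; (1 : F), α^2] * !![α, 0; 0, (1 : F) + α^2] = !![(1 : F) + α, α + α^2; α, α] := mul2 (by linear_combination ((1 : F)) * hα + ((-1 : F) + (-1 : F) * α) * h2) (by linear_combination ((1 : F) + α) * hα + ((-1 : F) * α) * h2) (by ring) (by linear_combination (α) * hα + ((-1 : F) * α) * h2)
  have m13 : !![(1 : F) + α, α + α^2; α, α] * !![α, 0; 0, (1 : F) + α^2] = !![α + α^2, (1 : F) + α; α^2, (1 : F)] := mul2 (by ring) (by linear_combination ((1 : F) + α) * hα + ((-1 : F) + (-1 : F) * α) * h2) (by ring) (by linear_combination ((1 : F)) * hα + ((-1 : F)) * h2)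
  have m14 : !![α + α^2, (1 : F) + α; α^2, (1 : F)] * !![α^2, (1 : F) + α + α^2; (1 : F), α^2] = !![α + α^2, (1 : F) + α; (1 : F) + α + α^2, (1 : F) + α^2] := mul2 (by linear_combination ((1 : F) + α) * hα + ((-1 : F) * α + (-1 : F) * α^2) * h2) (by linear_combination ((3 : F) + α) * hα + ((-2 : F) + (-2 : F) * α + α^2) * h2) (by linear_combination (α) * hα + ((-1 : F) * α + (-1 : F) * α^2) * h2) (by linear_combination ((1 : F) + α) * hα + ((-1 : F) + (-1 : F) * α) * h2)
  have m15 : !![α + α^2, (1 : F); (1 : F) + α + α^2, (1 : F)] * !![(1 : F), α + α^2; 0, (1 : F)] = !![α + α^2, (1 : F) + α; (1 : F) + α + α^2, (1 : F) + α^2] := mul2 (by ring) (by linear_combination ((2 : F) + α) * hα + ((-1 : F) + (-2 : F) * α) * h2) (by ring) (by linear_combination ((2 : F) + α) * hα + ((-1 : F) + (-1 : F) * α) * h2)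
  have m16 : !![(1 : F), 0; (1 : F) + α^2, (1 : F)] * !![α^2, (1 : F) + α + α^2; (1 : F), α^2] = !![α^2, (1 : F) + α + α^2; (1 : F) + α, α] := mul2 (by ring) (by ring) (by linear_combination (α) * hα + ((-1 : F) * α) * h2) (by linear_combination ((1 : F) + α) * hα + ((-1 : F) * α + α^2) * h2)
  have m17 : !![α^2, (1 : F) + α + α^2; (1 : F) + α, α] * !![α, 0; 0, (1 : F) + α^2] = !![(1 : F) + α, α + α^2; α + α^2, (1 : F)] := mul2 (by linear_combination ((1 : F)) * hα + ((-1 : F) + (-1 : F) * α) * h2) (by linear_combination ((1 : F) + α) * hα + ((-1 : F) * α) * h2) (by ring) (by linear_combination ((1 : F)) * hα + ((-1 : F)) * h2)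
  have m18 : !![(1 : F) + α, α + α^2; α + α^2, (1 : F)] * !![α, 0; 0, (1 : F) + α^2] = !![α + α^2, (1 : F) + α; (1 : F) + α + α^2, (1 : F) + α^2] := mul2 (by ring) (by linear_combination ((1 : F) + α) * hα + ((-1 : F) + (-1 : F) * α) * h2) (by linear_combination ((1 : F)) * hα + ((-1 : F) + (-1 : F) * α) * h2) (by ring)

  set X : Matrix.SpecialLinearGroup (Fin 2) F := ⟨_, hdetx⟩ with hXdef
  set Y : Matrix.SpecialLinearGroup (Fin 2) F := ⟨_, hdety⟩ with hYdef
  set Z : Matrix.SpecialLinearGroup (Fin 2) F := ⟨_, hdetz⟩ with hZdef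
  -- SL-level identities
  have hxy : X * Y = Z := Subtype.ext m7
  have hx2 : X^2 = 1 := by
    have e : X^2 = X*X := pow_two X
    rw [e]; exact Subtype.ext (m8.trans Matrix.one_fin_two.symm)
  have hx1 : X ≠ 1 := by
    intro h
    have h' := congrFun (congrFun (Subtype.ext_iff.mp h) 1) 0
    simp [Matrix.one_apply] at h'
    exact one_ne_zero h'
  have hy3m : !![(1 : F) + α, α + α^2; α, α] * !![(1 : F) + α, α + α^2; α, α] *
      !![(1 : F) + α, α + α^2; α, α] = (1 : Matrix (Fin 2) (Fin 2) F) := by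
    rw [m9]; exact m10.trans Matrix.one_fin_two.symm
  have hy3 : Y^3 = 1 := by
    have e : Y^3 = Y*Y*Y := by
      rw [show Y^3 = Y^2*Y from pow_succ Y 2, show Y^2 = Y*Y from pow_two Y]
    rw [e]; exact Subtype.ext hy3m
  have hy1 : Y ≠ 1 := by
    intro h
    have h' := congrFun (congrFun (Subtype.ext_iff.mp h) 1) 0
    simp [Matrix.one_apply] at h'
    exact hα0 h'
  have hz7m : !![α, 0; 0, (1 : F) + α^2] * !![α, 0; 0, (1 : F) + α^2] *
      !![α, 0; 0, (1 : F) + α^2] * !![α, 0; 0, (1 : F) + α^2] * !![α, 0; 0, (1 : F) + α^2] *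
      !![α, 0; 0, (1 : F) + α^2] * !![α, 0; 0, (1 : F) + α^2] = (1 : Matrix (Fin 2) (Fin 2) F) := by
    rw [m1, m2, m3, m4, m5, m6]; exact Matrix.one_fin_two.symm
  have hz7 : Z^7 = 1 := by
    have e : Z^7 = Z*Z*Z*Z*Z*Z*Z := by
      rw [show Z^7 = Z^6*Z from pow_succ Z 6, show Z^6 = Z^5*Z from pow_succ Z 5,
        show Z^5 = Z^4*Z from pow_succ Z 4, show Z^4 = Z^3*Z from pow_succ Z 3,
        show Z^3 = Z^2*Z from pow_succ Z 2, show Z^2 = Z*Z from pow_two Z]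
    rw [e]; exact Subtype.ext hz7m
  have hz1 : Z ≠ 1 := by
    intro h
    have h' := congrFun (congrFun (Subtype.ext_iff.mp h) 0) 0
    simp [Matrix.one_apply] at h'
    exact hα1 h'
  -- the subgroup
  set H : Subgroup (Matrix.SpecialLinearGroup (Fin 2) F) := Subgroup.closure {X, Y} with hHdef
  have hX : X ∈ H := Subgroup.subset_closure (Set.mem_insert _ _)
  have hY : Y ∈ H := Subgroup.subset_closure (Set.mem_insert_of_mem _ rfl)
  have hZ : Z ∈ H := hxy ▸ mul_mem hX hY
  -- words giving the first transvections
  have mword_u : ((!![α, 0; 0, (1 : F) + α^2] * !![α, 0; 0, (1 : F) + α^2]) *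
      !![α^2, (1 : F) + α + α^2; (1 : F), α^2]) * !![(1 : F), α + α^2; 0, (1 : F)] =
      ((!![α^2, (1 : F) + α + α^2; (1 : F), α^2] * !![α, 0; 0, (1 : F) + α^2]) *
      !![α, 0; 0, (1 : F) + α^2]) * !![α^2, (1 : F) + α + α^2; (1 : F), α^2] := by
    rw [m1, m11, m15, m12, m13, m14]
  have hword_u : Z * Z * X * uu (α + α^2) = X * Z * Z * X := Subtype.ext mword_u
  have mword_l : ((!![(1 : F), 0; (1 : F) + α^2, (1 : F)] *
      !![α^2, (1 : F) + α + α^2; (1 : F), α^2]) * !![α, 0; 0, (1 : F) + α^2]) *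
      !![α, 0; 0, (1 : F) + α^2] =
      ((!![α^2, (1 : F) + α + α^2; (1 : F), α^2] * !![α, 0; 0, (1 : F) + α^2]) *
      !![α, 0; 0, (1 : F) + α^2]) * !![α^2, (1 : F) + α + α^2; (1 : F), α^2] := by
    rw [m16, m17, m18, m12, m13, m14]
  have hword_l : ll ((1 : F) + α^2) * X * Z * Z = X * Z * Z * X := Subtype.ext mword_l
  have hu0mem : uu (α + α^2) ∈ H := by
    have e : uu (α + α^2) = (Z * Z * X)⁻¹ * (X * Z * Z * X) := by rw [← hword_u]; group
    rw [e]
    exact mul_mem (inv_mem (mul_mem (mul_mem hZ hZ) hX))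
      (mul_mem (mul_mem (mul_mem hX hZ) hZ) hX)
  have hl0mem : ll ((1 : F) + α^2) ∈ H := by
    have e : ll ((1 : F) + α^2) = (X * Z * Z * X) * Z⁻¹ * Z⁻¹ * X⁻¹ := by rw [← hword_l]; group
    rw [e]
    exact mul_mem (mul_mem (mul_mem (mul_mem (mul_mem (mul_mem hX hZ) hZ) hX) (inv_mem hZ))
      (inv_mem hZ)) (inv_mem hX)
  -- conjugation
  have hconj_u : ∀ t : F, Z * uu t = uu (α^2 * t) * Z := by
    intro t
    have c1 : !![α, 0; 0, (1 : F) + α^2] * !![(1:F), t; 0, 1] = !![α, α*t; 0, (1 : F) + α^2] :=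
      mul2 (by ring) (by ring) (by ring) (by ring)
    have c2 : !![(1:F), α^2 * t; 0, 1] * !![α, 0; 0, (1 : F) + α^2] =
        !![α, α*t; 0, (1 : F) + α^2] :=
      mul2 (by ring) (by linear_combination (t*α) * hα + (-(t*α)) * h2) (by ring) (by ring)
    exact Subtype.ext (c1.trans c2.symm)
  have hconj_l : ∀ t : F, ll t * Z = Z * ll (α^2 * t) := by
    intro t
    have c3 : !![(1:F), 0; t, 1] * !![α, 0; 0, (1 : F) + α^2] = !![α, 0; t*α, (1 : F) + α^2] :=
      mul2 (by ring) (by ring) (by ring) (by ring)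
    have c4 : !![α, 0; 0, (1 : F) + α^2] * !![(1:F), 0; α^2 * t, 1] =
        !![α, 0; t*α, (1 : F) + α^2] :=
      mul2 (by ring) (by ring) (by linear_combination (t*α) * hα + (-(t*α)) * h2) (by ring)
    exact Subtype.ext (c3.trans c4.symm)
  have hstep_u : ∀ t : F, uu t ∈ H → uu (α^2 * t) ∈ H := by
    intro t ht
    have e : uu (α^2 * t) = Z * uu t * Z⁻¹ := by
      rw [eq_mul_inv_iff_mul_eq]; exact (hconj_u t).symm
    rw [e]; exact mul_mem (mul_mem hZ ht) (inv_mem hZ)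
  have hstep_l : ∀ t : F, ll t ∈ H → ll (α^2 * t) ∈ H := by
    intro t ht
    have e : ll (α^2 * t) = Z⁻¹ * (ll t * Z) := by
      rw [eq_inv_mul_iff_mul_eq]; exact (hconj_l t).symm
    rw [e]; exact mul_mem (inv_mem hZ) (mul_mem ht hZ)
  have hpow_u : ∀ n : ℕ, uu ((α + α^2) * (α^2)^n) ∈ H := by
    intro n
    induction n with
    | zero => simpa using hu0mem
    | succ n ih =>
      have e : (α + α^2) * (α^2)^(n+1) = α^2 * ((α + α^2) * (α^2)^n) := by ring
      rw [e]; exact hstep_u _ ih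
  have hpow_l : ∀ n : ℕ, ll (((1 : F) + α^2) * (α^2)^n) ∈ H := by
    intro n
    induction n with
    | zero => simpa using hl0mem
    | succ n ih =>
      have e : ((1 : F) + α^2) * (α^2)^(n+1) = α^2 * (((1 : F) + α^2) * (α^2)^n) := by ring
      rw [e]; exact hstep_l _ ih
  have hgen : ∀ t : F, t ≠ 0 → ∀ t₀ : F, (ht₀ : t₀ ≠ 0) → ∃ n : ℕ, t = t₀ * (α^2)^n := by
    intro t ht t₀ ht₀
    have hg : Units.mk0 (α^2) (pow_ne_zero 2 hα0) ≠ 1 := by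
      intro h
      exact hα21 (by simpa using congrArg Units.val h)
    obtain ⟨n, hn⟩ := (Submonoid.mem_powers_iff (Units.mk0 (t * t₀⁻¹)
      (mul_ne_zero ht (inv_ne_zero ht₀))) (Units.mk0 (α^2) (pow_ne_zero 2 hα0))).mp
      (mem_powers_of_prime_card hcard hg)
    have hval : (α^2)^n = t * t₀⁻¹ := by simpa using congrArg Units.val hn
    exact ⟨n, by rw [hval]; field_simp⟩
  have hall_u : ∀ t : F, uu t ∈ H := by
    intro t
    rcases eq_or_ne t 0 with rfl | ht
    · have e : uu (0 : F) = 1 := Subtype.ext Matrix.one_fin_two.symm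
      rw [e]; exact one_mem H
    · obtain ⟨n, hn⟩ := hgen t ht (α + α^2) ht0
      rw [hn]; exact hpow_u n
  have hall_l : ∀ t : F, ll t ∈ H := by
    intro t
    rcases eq_or_ne t 0 with rfl | ht
    · have e : ll (0 : F) = 1 := Subtype.ext Matrix.one_fin_two.symm
      rw [e]; exact one_mem H
    · obtain ⟨n, hn⟩ := hgen t ht ((1 : F) + α^2) ht1
      rw [hn]; exact hpow_l n
  -- every SL matrix with nonzero lower-left entry is in H
  have hAmem : ∀ M : Matrix.SpecialLinearGroup (Fin 2) F, M.val 1 0 ≠ 0 → M ∈ H := by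
    intro M hc
    have hdet := M.2
    rw [Matrix.det_fin_two] at hdet
    have s1 : !![(1:F), (M.val 0 0 - 1)/(M.val 1 0); 0, 1] * !![(1:F), 0; M.val 1 0, 1] =
        !![1 + ((M.val 0 0 - 1)/(M.val 1 0))*(M.val 1 0), (M.val 0 0 - 1)/(M.val 1 0);
           M.val 1 0, 1] :=
      mul2 (by ring) (by ring) (by ring) (by ring)
    have s2 : !![1 + ((M.val 0 0 - 1)/(M.val 1 0))*(M.val 1 0), (M.val 0 0 - 1)/(M.val 1 0);
           M.val 1 0, 1] * !![(1:F), (M.val 1 1 - 1)/(M.val 1 0); 0, 1] =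
        !![M.val 0 0, M.val 0 1; M.val 1 0, M.val 1 1] :=
      mul2 (by field_simp; ring) (by field_simp; linear_combination hdet)
        (by ring) (by field_simp; ring)
    have s3 : (!![(1:F), (M.val 0 0 - 1)/(M.val 1 0); 0, 1] * !![(1:F), 0; M.val 1 0, 1]) *
        !![(1:F), (M.val 1 1 - 1)/(M.val 1 0); 0, 1] =
        !![M.val 0 0, M.val 0 1; M.val 1 0, M.val 1 1] := by rw [s1]; exact s2
    have hM : M = uu ((M.val 0 0 - 1)/(M.val 1 0)) * ll (M.val 1 0) *
        uu ((M.val 1 1 - 1)/(M.val 1 0)) :=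
      Subtype.ext ((Matrix.eta_fin_two M.val).trans s3.symm)
    rw [hM]
    exact mul_mem (mul_mem (hall_u _) (hall_l _)) (hall_u _)
  -- conclude
  refine ⟨X, Y, orderOf_eq_prime hx2 hx1, orderOf_eq_prime hy3 hy1, ?_, ?_⟩
  · rw [hxy]; exact orderOf_eq_prime hz7 hz1
  · rw [← hHdef]
    rw [Subgroup.eq_top_iff']
    intro M
    by_cases hc : M.val 1 0 = 0
    · have hd : M.val 1 1 ≠ 0 := by
        intro h0
        have hdet := M.2
        rw [Matrix.det_fin_two, hc, h0] at hdet
        simp at hdet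
      have e0 : !![M.val 0 0, M.val 0 1; M.val 1 0, M.val 1 1] * !![(1:F), 0; 1, 1] =
          !![M.val 0 0 + M.val 0 1, M.val 0 1; M.val 1 0 + M.val 1 1, M.val 1 1] :=
        mul2 (by ring) (by ring) (by ring) (by ring)
      have key : (M * ll 1).val 1 0 ≠ 0 := by
        have e : (M * ll 1).val 1 0 = M.val 1 0 + M.val 1 1 := by
          show (M.val * !![(1:F), 0; 1, 1]) 1 0 = _
          conv_lhs => rw [Matrix.eta_fin_two M.val]
          rw [e0]
          simp
        rw [e, hc, zero_add]; exact hd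
      have e2 : M = (M * ll 1) * (ll 1)⁻¹ := by group
      rw [e2]
      exact mul_mem (hAmem _ key) (inv_mem (hall_l 1))
    · exact hAmem M hc

theorem sl2_8_is_hurwitz :
    ∃ x y : Matrix.SpecialLinearGroup (Fin 2) (GaloisField 2 3),
      orderOf x = 2 ∧ orderOf y = 3 ∧ orderOf (x * y) = 7 ∧
        Subgroup.closure {x, y} = ⊤ := by
  have h2 : (2 : GaloisField 2 3) = 0 := by
    have : (2 : GaloisField 2 3) = ((2 : ℕ) : GaloisField 2 3) := by norm_num
    rw [this, CharP.cast_eq_zero]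
  have hcard : Nat.card (GaloisField 2 3)ˣ = 7 := by
    rw [Nat.card_units, GaloisField.card 2 3 (by norm_num)]; norm_num
  -- a root of X^3 + X + 1
  obtain ⟨α, hα⟩ : ∃ α : GaloisField 2 3, α^3 + α + 1 = 0 := by
    set q : Polynomial (ZMod 2) := Polynomial.X^3 + Polynomial.X + 1 with hq
    have hq3 : q.natDegree = 3 := by rw [hq]; compute_degree!
    have hq0 : q ≠ 0 := fun h => by simp [h] at hq3
    have hqirr : Irreducible q := by
      rw [Polynomial.irreducible_iff_roots_eq_zero_of_degree_le_three (by omega) (by omega)]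
      have hroots : ∀ r : ZMod 2, r^3 + r + 1 ≠ 0 := by decide
      rw [Multiset.eq_zero_iff_forall_notMem]
      intro r hr
      rw [Polynomial.mem_roots hq0, Polynomial.IsRoot] at hr
      simp only [hq, Polynomial.eval_add, Polynomial.eval_pow, Polynomial.eval_X,
        Polynomial.eval_one] at hr
      exact hroots r hr
    haveI : Fact (Irreducible q) := ⟨hqirr⟩
    have hKcard : Nat.card (AdjoinRoot q) = 2^3 := by
      rw [Nat.card_congr (AdjoinRoot.powerBasis hq0).basis.equivFun.toEquiv,
        Nat.card_eq_fintype_card]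
      simp [AdjoinRoot.powerBasis_dim, hq3, ZMod.card]
    let e := GaloisField.algEquivGaloisField 2 3 hKcard
    refine ⟨e.toRingEquiv (AdjoinRoot.root q), ?_⟩
    have hroot : (AdjoinRoot.root q)^3 + (AdjoinRoot.root q) + 1 = 0 := by
      have h := AdjoinRoot.mk_self (f := q)
      rw [hq] at h
      simpa [map_add, map_pow, AdjoinRoot.mk_X, _root_.map_one] using h
    have h5 := congrArg e.toRingEquiv hroot
    rwa [map_add, map_add, map_pow, _root_.map_one, map_zero] at h5
  exact sl2_aux α h2 hα hcard
end

section
/- Frobenius's structure constant formula: let G be a finite group and C₁, C₂, C₃ conjugacy classes of G with fixed representatives g₁ ∈ C₁, g₂ ∈ C₂, g₃ ∈ C₃. Then the number of triples (x, y, z) ∈ C₁ × C₂ × C₃ with x*y*z = 1 equals (|C₁|·|C₂|·|C₃|/|G|) · Σ_{χ ∈ Irr(G)} χ(g₁)χ(g₂)χ(g₃)/χ(1), where Irr(G) is the set of irreducible complex characters of G. -/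
open CategoryTheory

set_option linter.unusedSectionVars false
open CategoryTheory Module

namespace FrobeniusAux
variable {G : Type} [Group G] [Fintype G]
variable {W : Type} [AddCommGroup W] [Module ℂ W] [FiniteDimensional ℂ W]

/-- Invariant submodule of a representation. -/
def IsInv (ρ : Representation ℂ G W) (p : Submodule ℂ W) : Prop :=
  ∀ g : G, ∀ x ∈ p, ρ g x ∈ p

/-- The subrepresentation on an invariant submodule. -/
noncomputable def subRep (ρ : Representation ℂ G W) (p : Submodule ℂ W) (hp : IsInv ρ p) :
    Representation ℂ G p where
  toFun g := (ρ g).restrict (fun x hx => hp g x hx)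
  map_one' := by ext x; simp [LinearMap.restrict_apply]
  map_mul' g h := by ext x; simp [LinearMap.restrict_apply]

@[simp] lemma subRep_apply (ρ : Representation ℂ G W) (p : Submodule ℂ W) (hp : IsInv ρ p)
    (g : G) (x : p) : (subRep ρ p hp g x : W) = ρ g (x : W) := rfl

/-- Maschke: every invariant submodule has an invariant complement. -/
lemma exists_inv_isCompl (ρ : Representation ℂ G W) (p : Submodule ℂ W) (hp : IsInv ρ p) :
    ∃ q : Submodule ℂ W, IsInv ρ q ∧ IsCompl p q := by
  obtain ⟨q₀, hq₀⟩ := Submodule.exists_isCompl p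
  set π₀ : W →ₗ[ℂ] p := p.linearProjOfIsCompl q₀ hq₀ with hπ₀
  set T : W →ₗ[ℂ] p :=
    (Fintype.card G : ℂ)⁻¹ • ∑ g : G, (subRep ρ p hp g) ∘ₗ π₀ ∘ₗ ρ g⁻¹ with hT
  have hcard : (Fintype.card G : ℂ) ≠ 0 := Nat.cast_ne_zero.mpr Fintype.card_ne_zero
  have hTp : ∀ x : p, T x = x := by
    intro x
    have : ∀ g : G, ((subRep ρ p hp g) ∘ₗ π₀ ∘ₗ ρ g⁻¹) (x : W) = x := by
      intro g
      have hx : ρ g⁻¹ (x : W) ∈ p := hp g⁻¹ x x.2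
      have : π₀ (ρ g⁻¹ (x : W)) = ⟨ρ g⁻¹ (x : W), hx⟩ :=
        Submodule.linearProjOfIsCompl_apply_left hq₀ ⟨ρ g⁻¹ (x : W), hx⟩
      ext
      simp only [LinearMap.comp_apply, this, subRep_apply]
      rw [← LinearMap.comp_apply, ← Module.End.mul_eq_comp, ← map_mul, mul_inv_cancel, map_one,
        Module.End.one_apply]
    simp only [hT, LinearMap.smul_apply, LinearMap.sum_apply, this]
    rw [Finset.sum_const, Finset.card_univ, ← Nat.cast_smul_eq_nsmul ℂ, smul_smul,
      inv_mul_cancel₀ hcard, one_smul]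
  have hcomm : ∀ h : G, ∀ x : W, (T (ρ h x) : W) = ρ h (T x : W) := by
    intro h x
    have key : ∀ g : G, ((subRep ρ p hp (h * g)) ∘ₗ π₀ ∘ₗ ρ (h * g)⁻¹) (ρ h x)
        = ρ h ((((subRep ρ p hp g) ∘ₗ π₀ ∘ₗ ρ g⁻¹) x : p) : W) := by
      intro g
      simp only [LinearMap.comp_apply, subRep_apply]
      rw [mul_inv_rev, map_mul, map_mul, Module.End.mul_apply, Module.End.mul_apply,
        ← LinearMap.comp_apply (ρ h⁻¹) (ρ h), ← Module.End.mul_eq_comp, ← map_mul,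
        inv_mul_cancel, map_one, Module.End.one_apply]
    calc (T (ρ h x) : W)
        = (Fintype.card G : ℂ)⁻¹ • ∑ g : G,
            ((((subRep ρ p hp g) ∘ₗ π₀ ∘ₗ ρ g⁻¹) (ρ h x) : p) : W) := by
          simp [hT, Submodule.coe_smul, Submodule.coe_sum]
      _ = (Fintype.card G : ℂ)⁻¹ • ∑ g : G,
            ((((subRep ρ p hp (h * g)) ∘ₗ π₀ ∘ₗ ρ (h * g)⁻¹) (ρ h x) : p) : W) := by
          congr 1
          exact (Fintype.sum_equiv (Equiv.mulLeft h) _ _ (fun g => rfl)).symm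
      _ = (Fintype.card G : ℂ)⁻¹ • ∑ g : G,
            ρ h ((((subRep ρ p hp g) ∘ₗ π₀ ∘ₗ ρ g⁻¹) x : p) : W) := by
          simp only [key]
      _ = ρ h (T x : W) := by
          rw [← map_sum, ← map_smul]
          simp [hT, Submodule.coe_smul, Submodule.coe_sum]
  refine ⟨LinearMap.ker T, ?_, LinearMap.isCompl_of_proj hTp⟩
  intro g x hx
  have : (T (ρ g x) : W) = 0 := by
    rw [hcomm g x, LinearMap.mem_ker.mp hx]; simp
  exact LinearMap.mem_ker.mpr (Subtype.ext this)

/-- Trace additivity over an invariant complement pair. -/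
lemma trace_eq_add_of_isCompl (ρ : Representation ℂ G W) (p q : Submodule ℂ W)
    (hp : IsInv ρ p) (hq : IsInv ρ q) (hpq : IsCompl p q) (g : G) :
    LinearMap.trace ℂ W (ρ g) =
      LinearMap.trace ℂ p (subRep ρ p hp g) + LinearMap.trace ℂ q (subRep ρ q hq g) := by
  set N : Bool → Submodule ℂ W := fun b => bif b then p else q with hN
  have hint : DirectSum.IsInternal N := by
    rw [DirectSum.isInternal_submodule_iff_isCompl N (i := true) (j := false) (by simp)
      (by ext b; cases b <;> simp)]
    exact hpq
  have hmaps : ∀ b, Set.MapsTo (ρ g) (N b) (N b) := by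
    rintro (_|_) x hx
    · exact hq g x hx
    · exact hp g x hx
  rw [LinearMap.trace_eq_sum_trace_restrict hint hmaps]
  rw [Fintype.sum_bool]
  rfl

lemma simple_of_irr (X : FDRep ℂ G) (h0 : Nontrivial X)
    (hirr : ∀ q : Submodule ℂ X, IsInv X.ρ q → q = ⊥ ∨ q = ⊤) : Simple X := by
  constructor
  intro Y f hm
  constructor
  · intro hiso hf0
    obtain ⟨w, hw⟩ := exists_ne (0 : X)
    have h2 : f.hom ((inv f).hom w) = w := by
      calc f.hom ((inv f).hom w) = Action.Hom.hom (inv f ≫ f) w := rfl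
        _ = Action.Hom.hom (𝟙 X) w := by rw [IsIso.inv_hom_id]
        _ = w := rfl
    have hfh : f.hom = (0 : Y ⟶ X).hom := congrArg _ hf0
    rw [hfh] at h2
    exact hw (h2.symm.trans rfl)
  · intro hf0
    set φ : (Y : Type) →ₗ[ℂ] (X : Type) := f.hom.hom.hom with hφ
    have hcomm : ∀ g : G, ∀ y : Y, φ (Y.ρ g y) = X.ρ g (φ y) := by
      intro g y; exact congrArg (fun u => u.hom.hom y) (f.comm g)
    have hinj : Function.Injective φ := by
      rw [← LinearMap.ker_eq_bot]
      by_contra hK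
      set K := LinearMap.ker φ with hKdef
      have hKinv : IsInv Y.ρ K := by
        intro g x hx
        rw [LinearMap.mem_ker] at hx ⊢
        rw [hcomm, hx, map_zero]
      let Z : FDRep ℂ G := FDRep.of (subRep Y.ρ K hKinv)
      let ι : Z ⟶ Y := ⟨FGModuleCat.ofHom K.subtype, fun g => rfl⟩
      have hι : ι ≫ f = 0 ≫ f := by
        rw [Limits.zero_comp]
        ext x
        exact x.2
      have hι0 : ι = 0 := hm.right_cancellation _ _ hι
      obtain ⟨x, hx, hx0⟩ := Submodule.exists_mem_ne_zero_of_ne_bot hK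
      have : (⟨x, hx⟩ : K) = (0 : Z) → x = 0 := fun h => congrArg Subtype.val h
      have := congrArg (fun (u : Z ⟶ Y) => u.hom ⟨x, hx⟩) hι0
      simp only at this
      exact hx0 this
    have hRinv : IsInv X.ρ (LinearMap.range φ) := by
      rintro g x ⟨y, rfl⟩
      exact ⟨Y.ρ g y, (hcomm g y)⟩
    have hsurj : Function.Surjective φ := by
      rw [← LinearMap.range_eq_top]
      rcases hirr _ hRinv with h | h
      · exfalso
        apply hf0
        ext y
        have : φ y ∈ LinearMap.range φ := ⟨y, rfl⟩
        rw [h] at this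
        simpa using this
      · exact h
    set e : (Y : Type) ≃ₗ[ℂ] (X : Type) := LinearEquiv.ofBijective φ ⟨hinj, hsurj⟩ with he
    have hecomm : ∀ g : G, ∀ x : X, e.symm (X.ρ g x) = Y.ρ g (e.symm x) := by
      intro g x
      apply hinj
      show φ _ = φ _
      rw [hcomm]
      have h1 : φ (e.symm (X.ρ g x)) = X.ρ g x := e.apply_symm_apply _
      have h2 : φ (e.symm x) = x := e.apply_symm_apply _
      rw [h1, h2]
    let finv : X ⟶ Y := ⟨FGModuleCat.ofHom e.symm.toLinearMap, fun g => by
      ext x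
      exact hecomm g x⟩
    refine ⟨⟨finv, ?_, ?_⟩⟩
    · ext y
      exact e.symm_apply_apply y
    · ext x
      exact e.apply_symm_apply x

end FrobeniusAux

namespace FrobeniusAux
open CategoryTheory Module
variable {G : Type} [Group G] [Fintype G]

lemma char_decomp {ι : Type*} [Fintype ι] (V : ι → FDRep ℂ G)
    (hcomplete : ∀ W : FDRep ℂ G, Simple W → ∃ i, Nonempty (W ≅ V i))
    (X : FDRep ℂ G) :
    ∃ m : ι → ℕ, ∀ g : G, X.character g = ∑ i, (m i : ℂ) * (V i).character g := by
  classical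
  suffices h : ∀ n : ℕ, ∀ X : FDRep ℂ G, finrank ℂ X = n →
      ∃ m : ι → ℕ, ∀ g : G, X.character g = ∑ i, (m i : ℂ) * (V i).character g by
    exact h _ X rfl
  intro n
  induction n using Nat.strong_induction_on with
  | _ n IH =>
    intro X hX
    by_cases h0 : finrank ℂ X = 0
    · refine ⟨0, fun g => ?_⟩
      have : Subsingleton X := Module.finrank_zero_iff.mp h0
      have hρ : X.ρ g = 0 := Subsingleton.elim _ _
      show LinearMap.trace ℂ X (X.ρ g) = _
      rw [hρ, map_zero]
      simp
    · have hnt : Nontrivial X := Module.finrank_pos_iff.mp (Nat.pos_of_ne_zero h0)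
      -- find a minimal nonzero invariant submodule
      set P : ℕ → Prop := fun k => ∃ p : Submodule ℂ X, IsInv X.ρ p ∧ p ≠ ⊥ ∧ finrank ℂ p = k
        with hP
      have hPex : ∃ k, P k :=
        ⟨finrank ℂ (⊤ : Submodule ℂ X), ⊤, fun g x _ => trivial, top_ne_bot, rfl⟩
      obtain ⟨p, hpinv, hpne, hpfin⟩ := Nat.find_spec hPex
      have hpmin : ∀ q : Submodule ℂ X, IsInv X.ρ q → q ≠ ⊥ →
          finrank ℂ p ≤ finrank ℂ q := by
        intro q hqinv hqne
        rw [hpfin]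
        exact Nat.find_min' hPex ⟨q, hqinv, hqne, rfl⟩
      -- the subrepresentation on p is irreducible
      have hirr : ∀ q : Submodule ℂ (↥p), IsInv (subRep X.ρ p hpinv) q → q = ⊥ ∨ q = ⊤ := by
        intro q hqinv
        by_cases hq : q = ⊥
        · exact Or.inl hq
        · right
          set q' : Submodule ℂ X := q.map p.subtype with hq'
          have hq'inv : IsInv X.ρ q' := by
            rintro g x ⟨y, hy, rfl⟩
            exact ⟨subRep X.ρ p hpinv g y, hqinv g y hy, rfl⟩
          have hq'ne : q' ≠ ⊥ := by
            obtain ⟨y, hy, hy0⟩ := Submodule.exists_mem_ne_zero_of_ne_bot hq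
            intro hbot
            have : (y : X) ∈ q' := ⟨y, hy, rfl⟩
            rw [hbot, Submodule.mem_bot] at this
            exact hy0 (Subtype.ext this)
          have hle : q' ≤ p := by
            rintro x ⟨y, _, rfl⟩; exact y.2
          have : q' = p := Submodule.eq_of_le_of_finrank_le hle (hpmin q' hq'inv hq'ne)
          rw [Submodule.eq_top_iff']
          intro x
          have hx : (x : X) ∈ q' := this.symm ▸ x.2
          obtain ⟨y, hy, hyx⟩ := hx
          rwa [show x = y from (Subtype.ext hyx.symm)]
      have hpnt : Nontrivial (↥p) := by
        obtain ⟨x, hx, hx0⟩ := Submodule.exists_mem_ne_zero_of_ne_bot hpne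
        exact ⟨⟨x, hx⟩, 0, by simpa using hx0⟩
      set Xp : FDRep ℂ G := FDRep.of (subRep X.ρ p hpinv) with hXp
      have hXpsimple : Simple Xp := by
        apply simple_of_irr Xp hpnt
        intro q hqinv
        exact hirr q hqinv
      obtain ⟨i₀, ⟨iso⟩⟩ := hcomplete Xp hXpsimple
      have hchar_p : ∀ g : G, Xp.character g = (V i₀).character g := by
        intro g; rw [FDRep.char_iso iso]
      -- invariant complement
      obtain ⟨q, hqinv, hpq⟩ := exists_inv_isCompl X.ρ p hpinv
      set Xq : FDRep ℂ G := FDRep.of (subRep X.ρ q hqinv) with hXq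
      have hqlt : finrank ℂ (↥q) < n := by
        have hsum : finrank ℂ (↥p) + finrank ℂ (↥q) = finrank ℂ X :=
          Submodule.finrank_add_eq_of_isCompl hpq
        have hppos : 0 < finrank ℂ (↥p) := finrank_pos
        omega
      obtain ⟨mq, hmq⟩ := IH _ hqlt Xq rfl
      refine ⟨fun i => mq i + (if i = i₀ then 1 else 0), fun g => ?_⟩
      have hadd : X.character g = Xp.character g + Xq.character g :=
        trace_eq_add_of_isCompl X.ρ p q hpinv hqinv hpq g
      rw [hadd, hchar_p, hmq]
      push_cast
      rw [Finset.sum_congr rfl (fun i _ => add_mul ((mq i : ℂ)) _ _), Finset.sum_add_distrib]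
      have : ∑ i, (if i = i₀ then (1:ℂ) else 0) * (V i).character g = (V i₀).character g := by
        rw [Finset.sum_congr rfl (fun i _ => ite_mul _ _ _ _)]
        simp [Finset.sum_ite_eq' Finset.univ i₀]
      rw [this]
      ring


section
open scoped Classical
variable {ι : Type*} [Fintype ι]

/-- The character of the regular representation. -/
lemma char_regular (g : G) :
    (FDRep.of (Representation.ofMulAction ℂ G G)).character g =
      if g = 1 then (Fintype.card G : ℂ) else 0 := by
  show LinearMap.trace ℂ (MonoidAlgebra ℂ G) (Representation.ofMulAction ℂ G G g) = _
  rw [show Representation.ofMulAction ℂ G G g = (MonoidAlgebra.coeffLinearEquiv ℂ).symm.conj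
    (Finsupp.lmapDomain ℂ ℂ (g • ·)) from rfl, LinearMap.trace_conj']
  rw [LinearMap.trace_eq_matrix_trace ℂ (Finsupp.basisSingleOne)]
  rw [Matrix.trace]
  have hentry : ∀ h : G, LinearMap.toMatrix Finsupp.basisSingleOne Finsupp.basisSingleOne
      (Finsupp.lmapDomain ℂ ℂ (g • ·) : (G →₀ ℂ) →ₗ[ℂ] (G →₀ ℂ)) h h = if g = 1 then 1 else 0 := by
    intro h
    rw [LinearMap.toMatrix_apply]
    simp only [Finsupp.coe_basisSingleOne, Finsupp.lmapDomain_apply, Finsupp.mapDomain_single,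
      Finsupp.basisSingleOne_repr, LinearEquiv.refl_apply]
    rw [Finsupp.single_apply]
    congr 1
    simp only [smul_eq_mul, eq_iff_iff]
    constructor
    · intro hh; exact mul_right_cancel (by rw [hh, one_mul])
    · intro hh; rw [hh, one_mul]
  simp only [Matrix.diag_apply, hentry]
  rw [Finset.sum_const, Finset.card_univ]
  by_cases hg : g = 1 <;> simp [hg]

variable (V : ι → FDRep ℂ G) (hsimple : ∀ i, Simple (V i))
  (hdistinct : ∀ i j : ι, Nonempty (V i ≅ V j) → i = j)

include hsimple hdistinct in
lemma row_orthogonality (i j : ι) :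
    ∑ g : G, (V i).character g * (V j).character g⁻¹ =
      if i = j then (Fintype.card G : ℂ) else 0 := by
  haveI := hsimple i
  haveI := hsimple j
  have hcard : (Fintype.card G : ℂ) ≠ 0 := Nat.cast_ne_zero.mpr Fintype.card_ne_zero
  have h := FDRep.char_orthonormal (V i) (V j)
  rw [Nat.card_eq_fintype_card] at h
  have h2 := congrArg (fun t => (Fintype.card G : ℂ) * t) h
  simp only [← mul_assoc, mul_inv_cancel₀ hcard, one_mul] at h2
  have hiff : Nonempty (V i ≅ V j) ↔ i = j := ⟨hdistinct i j, fun hh => hh ▸ ⟨Iso.refl _⟩⟩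
  exact h2.trans (by by_cases hij : i = j <;> simp [hiff, hij])

variable (hcomplete : ∀ W : FDRep ℂ G, Simple W → ∃ i, Nonempty (W ≅ V i))

include hsimple hdistinct hcomplete in
/-- Column orthogonality against the identity column. -/
lemma column_one (g : G) :
    ∑ i : ι, (V i).character 1 * (V i).character g =
      if g = 1 then (Fintype.card G : ℂ) else 0 := by
  have hcard : (Fintype.card G : ℂ) ≠ 0 := Nat.cast_ne_zero.mpr Fintype.card_ne_zero
  obtain ⟨m, hm⟩ := char_decomp V hcomplete (FDRep.of (Representation.ofMulAction ℂ G G))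
  have hmval : ∀ j, (m j : ℂ) = (V j).character 1 := by
    intro j
    have way1 : ∑ g : G, (FDRep.of (Representation.ofMulAction ℂ G G)).character g *
        (V j).character g⁻¹ = (Fintype.card G : ℂ) * (V j).character 1 := by
      rw [Finset.sum_congr rfl (fun g _ => by rw [char_regular g])]
      simp only [ite_mul, zero_mul]
      rw [Finset.sum_ite_eq' Finset.univ (1 : G)]
      simp
    have way2 : ∑ g : G, (FDRep.of (Representation.ofMulAction ℂ G G)).character g *
        (V j).character g⁻¹ = (m j : ℂ) * (Fintype.card G : ℂ) := by
      rw [Finset.sum_congr rfl (fun g _ => by rw [hm g, Finset.sum_mul])]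
      rw [Finset.sum_comm]
      have : ∀ i, ∑ g : G, (m i : ℂ) * (V i).character g * (V j).character g⁻¹
          = (m i : ℂ) * (if i = j then (Fintype.card G : ℂ) else 0) := by
        intro i
        rw [← row_orthogonality V hsimple hdistinct i j, Finset.mul_sum]
        exact Finset.sum_congr rfl (fun g _ => by ring)
      rw [Finset.sum_congr rfl (fun i _ => this i)]
      simp [Finset.sum_ite_eq' Finset.univ j]
    have h := way1.symm.trans way2
    rw [mul_comm ((m j : ℂ)) _] at h
    exact (mul_left_cancel₀ hcard h).symm
  rw [← char_regular g, hm g]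
  exact Finset.sum_congr rfl (fun i _ => by rw [hmval i])

end

section ClassSum
open Module
open scoped Classical

variable (X : FDRep ℂ G)

/-- The conjugacy class of `g₀` as a finset. -/
noncomputable def cls (g₀ : G) : Finset G :=
  Finset.univ.filter (fun x => IsConj g₀ x)

lemma mem_cls {g₀ x : G} : x ∈ cls (G := G) g₀ ↔ IsConj g₀ x := by
  simp [cls]

lemma char_eq_on_cls (g₀ x : G) (hx : x ∈ cls (G := G) g₀) :
    X.character x = X.character g₀ := by
  obtain ⟨c, hc⟩ := isConj_iff.mp (mem_cls.mp hx)
  rw [← hc, FDRep.char_conj]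

lemma char_nonzero_at_one [Simple X] : X.character 1 ≠ 0 := by
  rw [FDRep.char_one]
  have hne : 𝟙 X ≠ 0 := id_nonzero X
  rcases subsingleton_or_nontrivial X with hs | hn
  · exfalso
    apply hne
    haveI : Subsingleton ((forget (FGModuleCat ℂ)).obj X.V) := hs
    ext v
    exact Subsingleton.elim _ _
  · have : 0 < finrank ℂ X := finrank_pos
    exact_mod_cast Nat.cast_ne_zero.mpr this.ne'

/-- The scalar by which the class sum acts on a simple representation, with its
defining properties. -/
lemma class_sum_scalar [Simple X] (g₀ : G) :
    ∃ c : ℂ, c * X.character 1 = ((cls (G := G) g₀).card : ℂ) * X.character g₀ ∧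
      ∀ z : G, ∑ x ∈ cls (G := G) g₀, X.character (x * z) = c * X.character z := by
  set T : (X : Type) →ₗ[ℂ] (X : Type) := ∑ x ∈ cls (G := G) g₀, X.ρ x with hT
  have hcomm : ∀ h : G, X.ρ h * T = T * X.ρ h := by
    intro h
    rw [hT, Finset.mul_sum, Finset.sum_mul]
    simp only [← map_mul]
    refine Finset.sum_nbij' (fun x => h * x * h⁻¹) (fun x => h⁻¹ * x * h) ?_ ?_ ?_ ?_ ?_
    · intro x hx
      rw [mem_cls] at hx ⊢
      exact hx.trans (isConj_iff.mpr ⟨h, by group⟩)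
    · intro x hx
      rw [mem_cls] at hx ⊢
      exact hx.trans (isConj_iff.mpr ⟨h⁻¹, by group⟩)
    · intro x _; group
    · intro x _; group
    · intro x _
      congr 1
      group
  have hcomm' : ∀ h : G, T.comp (X.ρ h) = (X.ρ h).comp T := by
    intro h
    rw [← Module.End.mul_eq_comp, ← Module.End.mul_eq_comp, hcomm h]
  set τ : X ⟶ X := ⟨FGModuleCat.ofHom T, fun h => by
    ext v; exact LinearMap.congr_fun (hcomm' h) v⟩ with hτ
  obtain ⟨c, hc⟩ := endomorphism_simple_eq_smul_id ℂ τ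
  have hchom : T = c • LinearMap.id := by
    have := congrArg (fun u => u.hom.hom.hom) hc
    exact this.symm
  refine ⟨c, ?_, ?_⟩
  · have h1 : LinearMap.trace ℂ X T = c * X.character 1 := by
      rw [hchom, map_smul, LinearMap.trace_id, smul_eq_mul, FDRep.char_one]
    have h2 : LinearMap.trace ℂ X T = ((cls (G := G) g₀).card : ℂ) * X.character g₀ := by
      rw [hT, map_sum]
      exact (Finset.sum_congr rfl (fun x hx => char_eq_on_cls X g₀ x hx)).trans
        (by rw [Finset.sum_const, nsmul_eq_mul])
    rw [← h1, h2]
  · intro z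
    have h1 : ∀ x : G, X.character (x * z) = LinearMap.trace ℂ X (X.ρ x * X.ρ z) := by
      intro x
      show LinearMap.trace ℂ X (X.ρ (x * z)) = _
      rw [map_mul]
    have h2 : (∑ x ∈ cls (G := G) g₀, X.character (x * z))
        = LinearMap.trace ℂ X (T * X.ρ z) := by
      rw [hT, Finset.sum_mul, map_sum]
      exact Finset.sum_congr rfl (fun x _ => h1 x)
    rw [h2, hchom]
    have h3 : (c • (LinearMap.id : (X : Type) →ₗ[ℂ] (X : Type))) * X.ρ z = c • X.ρ z := by
      ext v; simp
    rw [h3, map_smul, smul_eq_mul]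
    rfl

end ClassSum

end FrobeniusAux


open FrobeniusAux

/-- Frobenius's structure constant formula:  the number of triples `(x,y,z)` in
`C₁ × C₂ × C₃` with `x*y*z = 1` equals
`(|C₁|·|C₂|·|C₃|/|G|) · Σ_{χ ∈ Irr(G)} χ(g₁)χ(g₂)χ(g₃)/χ(1)`, where the irreducible
complex characters are given by a complete family of pairwise non-isomorphic simple
representations. -/
theorem frobenius_structure_constant_formula (G : Type) [Group G] [Fintype G]
    {ι : Type*} [Fintype ι] (V : ι → FDRep ℂ G)
    (hsimple : ∀ i, Simple (V i))
    (hdistinct : ∀ i j : ι, Nonempty (V i ≅ V j) → i = j)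
    (hcomplete : ∀ W : FDRep ℂ G, Simple W → ∃ i, Nonempty (W ≅ V i))
    (g₁ g₂ g₃ : G) (C₁ C₂ C₃ : Set G)
    (hC₁ : C₁ = {x | IsConj g₁ x}) (hC₂ : C₂ = {x | IsConj g₂ x})
    (hC₃ : C₃ = {x | IsConj g₃ x}) :
    (Nat.card {t : G × G × G //
        t.1 ∈ C₁ ∧ t.2.1 ∈ C₂ ∧ t.2.2 ∈ C₃ ∧ t.1 * t.2.1 * t.2.2 = 1} : ℂ) =
      ((Nat.card C₁ : ℂ) * (Nat.card C₂ : ℂ) * (Nat.card C₃ : ℂ) / (Nat.card G : ℂ)) *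
        ∑ i : ι, (V i).character g₁ * (V i).character g₂ * (V i).character g₃ /
          (V i).character 1 := by
  classical
  subst hC₁ hC₂ hC₃
  have hcard : (Fintype.card G : ℂ) ≠ 0 := Nat.cast_ne_zero.mpr Fintype.card_ne_zero
  -- cardinalities of the classes
  have hsetcard : ∀ g₀ : G, Nat.card {x | IsConj g₀ x} = (cls (G := G) g₀).card := by
    intro g₀
    rw [Nat.card_eq_fintype_card]
    rw [show (cls (G := G) g₀) = Finset.univ.filter (fun x => IsConj g₀ x) from rfl]
    rw [← Fintype.card_subtype]
    apply Fintype.card_congr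
    exact Equiv.refl _
  -- the number of triples as a finite sum
  have hNn : Nat.card {t : G × G × G //
      t.1 ∈ {x | IsConj g₁ x} ∧ t.2.1 ∈ {x | IsConj g₂ x} ∧ t.2.2 ∈ {x | IsConj g₃ x} ∧
        t.1 * t.2.1 * t.2.2 = 1} =
      ∑ x ∈ cls (G := G) g₁, ∑ y ∈ cls (G := G) g₂, ∑ z ∈ cls (G := G) g₃,
        (if x * y * z = 1 then 1 else 0) := by
    rw [Nat.card_eq_fintype_card, Fintype.card_subtype]
    have hfs : Finset.univ.filter (fun t : G × G × G =>
        t.1 ∈ {x | IsConj g₁ x} ∧ t.2.1 ∈ {x | IsConj g₂ x} ∧ t.2.2 ∈ {x | IsConj g₃ x} ∧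
          t.1 * t.2.1 * t.2.2 = 1) =
        (cls (G := G) g₁ ×ˢ cls (G := G) g₂ ×ˢ cls (G := G) g₃).filter
          (fun t => t.1 * t.2.1 * t.2.2 = 1) := by
      ext t
      simp only [Finset.mem_filter, Finset.mem_univ, true_and, Finset.mem_product, mem_cls,
        Set.mem_setOf_eq]
      tauto
    rw [hfs, Finset.card_filter, Finset.sum_product]
    refine Finset.sum_congr rfl (fun x _ => ?_)
    rw [Finset.sum_product]
  -- the indicator function via column orthogonality
  have hind : ∀ w : G, (if w = 1 then (1 : ℂ) else 0) =
      (Fintype.card G : ℂ)⁻¹ * ∑ i, (V i).character 1 * (V i).character w := by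
    intro w
    rw [column_one V hsimple hdistinct hcomplete w, mul_ite, inv_mul_cancel₀ hcard, mul_zero]
  -- class sum scalars
  have H2 : ∀ i, ∃ c : ℂ, c * (V i).character 1 =
      ((cls (G := G) g₂).card : ℂ) * (V i).character g₂ ∧
      ∀ z : G, ∑ x ∈ cls (G := G) g₂, (V i).character (x * z) = c * (V i).character z := by
    intro i; haveI := hsimple i; exact class_sum_scalar (V i) g₂
  have H3 : ∀ i, ∃ c : ℂ, c * (V i).character 1 =
      ((cls (G := G) g₃).card : ℂ) * (V i).character g₃ ∧
      ∀ z : G, ∑ x ∈ cls (G := G) g₃, (V i).character (x * z) = c * (V i).character z := by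
    intro i; haveI := hsimple i; exact class_sum_scalar (V i) g₃
  choose c₂ hc₂v hc₂s using H2
  choose c₃ hc₃v hc₃s using H3
  -- the triple class sum of each irreducible character
  have hkey : ∀ i : ι, (∑ x ∈ cls (G := G) g₁, ∑ y ∈ cls (G := G) g₂,
      ∑ z ∈ cls (G := G) g₃, (V i).character (x * y * z)) =
      c₂ i * c₃ i * ((cls (G := G) g₁).card : ℂ) * (V i).character g₁ := by
    intro i
    have step1 : ∀ x y : G, ∑ z ∈ cls (G := G) g₃, (V i).character (x * y * z) =
        c₃ i * (V i).character (x * y) := by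
      intro x y
      rw [← hc₃s i (x * y)]
      exact Finset.sum_congr rfl (fun z _ => by rw [FDRep.char_mul_comm])
    have step2 : ∀ x : G, ∑ y ∈ cls (G := G) g₂, (V i).character (x * y) =
        c₂ i * (V i).character x := by
      intro x
      rw [← hc₂s i x]
      exact Finset.sum_congr rfl (fun y _ => by rw [FDRep.char_mul_comm])
    calc ∑ x ∈ cls (G := G) g₁, ∑ y ∈ cls (G := G) g₂, ∑ z ∈ cls (G := G) g₃,
          (V i).character (x * y * z)
        = ∑ x ∈ cls (G := G) g₁, ∑ y ∈ cls (G := G) g₂, c₃ i * (V i).character (x * y) := by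
          exact Finset.sum_congr rfl fun x _ => Finset.sum_congr rfl fun y _ => step1 x y
      _ = ∑ x ∈ cls (G := G) g₁, c₃ i * (c₂ i * (V i).character x) := by
          refine Finset.sum_congr rfl fun x _ => ?_
          rw [← Finset.mul_sum, step2 x]
      _ = c₃ i * (c₂ i * (((cls (G := G) g₁).card : ℂ) * (V i).character g₁)) := by
          rw [← Finset.mul_sum, ← Finset.mul_sum]
          congr 2
          rw [Finset.sum_congr rfl (fun x hx => char_eq_on_cls (V i) g₁ x hx),
            Finset.sum_const, nsmul_eq_mul]
      _ = c₂ i * c₃ i * ((cls (G := G) g₁).card : ℂ) * (V i).character g₁ := by ring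
  -- put everything together
  rw [hNn]
  push_cast
  rw [Finset.sum_congr rfl (fun x _ => Finset.sum_congr rfl (fun y _ =>
    Finset.sum_congr rfl (fun z _ => hind (x * y * z))))]
  simp only [← Finset.mul_sum]
  rw [Finset.sum_congr rfl (fun x _ => Finset.sum_congr rfl (fun y _ => Finset.sum_comm)),
    Finset.sum_congr rfl (fun x _ => Finset.sum_comm), Finset.sum_comm]
  have hstep : ∀ i : ι, (∑ x ∈ cls (G := G) g₁, ∑ y ∈ cls (G := G) g₂,
      ∑ z ∈ cls (G := G) g₃, (V i).character 1 * (V i).character (x * y * z)) =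
      (V i).character 1 *
        (c₂ i * c₃ i * ((cls (G := G) g₁).card : ℂ) * (V i).character g₁) := by
    intro i
    rw [← hkey i, Finset.mul_sum]
    refine Finset.sum_congr rfl fun x _ => ?_
    rw [Finset.mul_sum]
    refine Finset.sum_congr rfl fun y _ => ?_
    rw [Finset.mul_sum]
  rw [Finset.sum_congr rfl (fun i _ => hstep i)]
  rw [Finset.mul_sum, Finset.mul_sum]
  rw [hsetcard g₁, hsetcard g₂, hsetcard g₃, Nat.card_eq_fintype_card (α := G)]
  refine Finset.sum_congr rfl (fun i _ => ?_)
  haveI := hsimple i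
  have hχ1 : (V i).character 1 ≠ 0 := char_nonzero_at_one (V i)
  have hc₂ : c₂ i = ((cls (G := G) g₂).card : ℂ) * (V i).character g₂ / (V i).character 1 :=
    (eq_div_iff hχ1).mpr (hc₂v i)
  have hc₃ : c₃ i = ((cls (G := G) g₃).card : ℂ) * (V i).character g₃ / (V i).character 1 :=
    (eq_div_iff hχ1).mpr (hc₃v i)
  have hd : ((finrank ℂ (V i) : ℂ)) ≠ 0 := by
    rw [← FDRep.char_one]; exact hχ1
  rw [hc₂, hc₃, FDRep.char_one]
  field_simp
end
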